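/- Let A be a finite-dimensional algebra over a field k, T an algebra anti-endomorphism of A, x ∈ J(A), and a ∈ A. Then the linear operator on A given by v ↦ a · T(v) · x is nilpotent. -/

import Mathlib

open Ideal Submodule

/-- Auxiliary descending chain `⊤, I•⊤ ⊔ K, I•(I•⊤ ⊔ K) ⊔ K, …`. -/
private def idealChain {A : Type*} [Ring A] (I K : Ideal A) : ℕ → Ideal A
  | 0 => ⊤
  | n + 1 => I • idealChain I K n ⊔ K

private lemma idealChain_succ_le {A : Type*} [Ring A] (I K : Ideal A) :
    ∀ n, idealChain I K (n + 1) ≤ idealChain I K n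
  | 0 => le_top
  | n + 1 =>
    sup_le_sup_right (Submodule.smul_mono le_rfl (idealChain_succ_le I K n)) K

/-- Noncommutative Nakayama-type statement: the chain
`Qₙ₊₁ = (jacobson K) • Qₙ ⊔ K` eventually falls inside `K`, provided `K`
is also a right ideal. -/
private lemma exists_idealChain_le {A : Type*} [Ring A] [IsArtinian A A] [IsNoetherian A A]
    (K : Ideal A) (hKr : ∀ z ∈ K, ∀ b : A, z * b ∈ K) :
    ∃ t, idealChain (Ideal.jacobson K) K t ≤ K := by
  set I := Ideal.jacobson K with hI
  have hanti : Antitone (fun n => idealChain I K n) :=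
    antitone_nat_of_succ_le (idealChain_succ_le I K)
  obtain ⟨t, ht⟩ := IsArtinian.monotone_stabilizes (R := A) (M := A)
    ⟨fun n => OrderDual.toDual (idealChain I K n), fun n m hnm => hanti hnm⟩
  refine ⟨t + 1, ?_⟩
  have hQ1 : idealChain I K t = idealChain I K (t + 1) :=
    congrArg OrderDual.ofDual (ht (t + 1) (Nat.le_succ t))
  have hQ2 : idealChain I K t = idealChain I K (t + 2) :=
    congrArg OrderDual.ofDual (ht (t + 2) (by omega))
  have hLfix : idealChain I K (t + 1) = I • idealChain I K (t + 1) ⊔ K :=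
    calc idealChain I K (t + 1) = idealChain I K t := hQ1.symm
      _ = idealChain I K (t + 2) := hQ2
      _ = I • idealChain I K (t + 1) ⊔ K := rfl
  by_contra hnle
  set π : A →ₗ[A] A ⧸ K := K.mkQ with hπdef
  set N : Submodule A (A ⧸ K) := Submodule.map π (idealChain I K (t + 1)) with hNdef
  have hNbot : N ≠ ⊥ := by
    intro h0
    apply hnle
    intro z hz
    have hz' : π z ∈ N := Submodule.mem_map_of_mem hz
    rw [h0, Submodule.mem_bot] at hz'
    simpa [hπdef, Submodule.Quotient.mk_eq_zero] using hz'
  have hmapK : Submodule.map π K = ⊥ := by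
    rw [eq_bot_iff, Submodule.map_le_iff_le_comap, Submodule.comap_bot, hπdef,
      Submodule.ker_mkQ]
  have hNfix : N = I • N := by
    conv_lhs => rw [hNdef, hLfix]
    rw [Submodule.map_sup, Submodule.map_smul'', hmapK, sup_bot_eq, hNdef]
  obtain ⟨P, hPs, hPmax⟩ :=
    (wellFounded_gt (α := Submodule A (A ⧸ K))).has_min {P | P < N} ⟨⊥, Ne.bot_lt hNbot⟩
  have hsmul : I • N ≤ P := by
    rw [Submodule.smul_le]
    intro i hi n hn
    by_cases hnP : n ∈ P
    · exact P.smul_mem i hnP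
    · set M : Ideal A := P.comap (LinearMap.toSpanSingleton A (A ⧸ K) n) with hMdef
      have hmemM : ∀ r : A, r ∈ M ↔ r • n ∈ P := by
        intro r
        simp [hMdef, Submodule.mem_comap, LinearMap.toSpanSingleton_apply]
      have hMne : M ≠ ⊤ := by
        intro hMt
        have h1 : (1 : A) ∈ M := hMt ▸ Submodule.mem_top
        rw [hmemM, one_smul] at h1
        exact hnP h1
      have hMmax : M.IsMaximal := by
        rw [Ideal.isMaximal_def]
        refine ⟨hMne, fun M'' hM'' => ?_⟩
        obtain ⟨r, hrM'', hrM⟩ := SetLike.exists_of_lt hM''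
        have hrnP : r • n ∉ P := fun h => hrM ((hmemM r).2 h)
        have hP'le : P ⊔ Submodule.span A {r • n} ≤ N :=
          sup_le hPs.le
            (Submodule.span_le.2 (Set.singleton_subset_iff.2 (N.smul_mem r hn)))
        have hP'gt : P < P ⊔ Submodule.span A {r • n} :=
          lt_of_le_of_ne le_sup_left (fun hEq =>
            hrnP (hEq ▸ Submodule.mem_sup_right (Submodule.mem_span_singleton_self _)))
        have hP' : P ⊔ Submodule.span A {r • n} = N := by
          rcases hP'le.lt_or_eq with hlt | heq
          · exact absurd hP'gt (hPmax _ hlt)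
          · exact heq
        have hnmem : n ∈ P ⊔ Submodule.span A {r • n} := hP' ▸ hn
        obtain ⟨p, hp, z, hz, hpzn⟩ := Submodule.mem_sup.1 hnmem
        obtain ⟨cc, hcc⟩ := Submodule.mem_span_singleton.1 hz
        have h1M : (1 : A) - cc * r ∈ M := by
          rw [hmemM, sub_smul, one_smul, mul_smul, hcc]
          have hnz : n - z = p := by rw [← hpzn]; abel
          rw [hnz]; exact hp
        have hcr : cc * r ∈ M'' := by
          simpa [smul_eq_mul] using M''.smul_mem cc hrM''
        have hone : (1 : A) ∈ M'' := by
          have := add_mem (hM''.le h1M) hcr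
          simpa using this
        exact Submodule.eq_top_iff'.2 fun y => by
          simpa [smul_eq_mul] using M''.smul_mem y hone
      have hKM : K ≤ M := by
        intro z hz
        rw [hmemM]
        obtain ⟨w, hwL, rfl⟩ := hn
        have h0 : z • (π w) = 0 := by
          rw [← map_smul π z w, smul_eq_mul]
          simpa [hπdef, Submodule.Quotient.mk_eq_zero] using hKr z hz w
        rw [h0]
        exact P.zero_mem
      have hjM : i ∈ M := by
        have hmem : i ∈ I := hi
        rw [hI] at hmem
        simp only [Ideal.jacobson] at hmem
        rw [Ideal.mem_sInf] at hmem
        exact hmem ⟨hKM, hMmax⟩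
      exact (hmemM i).1 hjM
  have hNP : N ≤ P := hNfix ▸ hsmul
  exact absurd (lt_of_lt_of_le hPs hNP) (lt_irrefl P)

/-- If `B : A → A` is additive, multiplicative, maps `K` into `K`, is
"surjective modulo `K`", and `K` is a two-sided ideal, then `B` maps the
Jacobson radical of `K` into itself. -/
private lemma jacobson_stable_of_mul {A : Type*} [Ring A] (K : Ideal A) (B : A → A)
    (hmul : ∀ u v, B (u * v) = B u * B v)
    (hadd : ∀ u v, B (u + v) = B u + B v)
    (hsub : ∀ u v, B (u - v) = B u - B v)
    (h0 : B 0 = 0)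
    (hBK : ∀ z ∈ K, B z ∈ K)
    (hKr : ∀ z ∈ K, ∀ b : A, z * b ∈ K)
    (hsurj : ∀ y : A, ∃ u, B u - y ∈ K) :
    ∀ b ∈ Ideal.jacobson K, B b ∈ Ideal.jacobson K := by
  have hB1 : B 1 - 1 ∈ K := by
    obtain ⟨u, hu⟩ := hsurj 1
    have h1 : B u * B 1 = B u := by rw [← hmul, mul_one]
    have h2 : (B u - 1) * B 1 ∈ K := hKr _ hu (B 1)
    have hEq : B 1 - 1 = (B u - 1) - (B u - 1) * B 1 := by
      rw [sub_mul, one_mul, h1]; abel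
    rw [hEq]; exact sub_mem hu h2
  intro b hb
  simp only [Ideal.jacobson] at hb ⊢
  rw [Ideal.mem_sInf] at hb ⊢
  intro M' hM'
  obtain ⟨hKM', hM'max⟩ := hM'
  set M : Ideal A :=
    { carrier := {r : A | B r ∈ M'}
      add_mem' := fun {u v} hu hv => by
        simp only [Set.mem_setOf_eq] at *
        rw [hadd]; exact add_mem hu hv
      zero_mem' := by
        simp only [Set.mem_setOf_eq, h0]; exact M'.zero_mem
      smul_mem' := fun r u hu => by
        simp only [Set.mem_setOf_eq, smul_eq_mul] at *
        rw [hmul]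
        simpa [smul_eq_mul] using M'.smul_mem (B r) hu } with hMdef
  have hmemM : ∀ r : A, r ∈ M ↔ B r ∈ M' := fun r => Iff.rfl
  have hKM : K ≤ M := fun z hz => (hmemM z).2 (hKM' (hBK z hz))
  have hMne : M ≠ ⊤ := by
    intro ht
    have h1M : B 1 ∈ M' := (hmemM 1).1 (ht ▸ Submodule.mem_top)
    have hone : (1 : A) ∈ M' := by
      have := M'.sub_mem h1M (hKM' hB1)
      simpa using this
    exact hM'max.ne_top (Submodule.eq_top_iff'.2 fun y => by
      simpa [smul_eq_mul] using M'.smul_mem y hone)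
  have hMmax : M.IsMaximal := by
    rw [Ideal.isMaximal_def]
    refine ⟨hMne, fun M'' hlt => ?_⟩
    obtain ⟨r, hr'', hrM⟩ := SetLike.exists_of_lt hlt
    have hBr : B r ∉ M' := fun h => hrM ((hmemM r).2 h)
    have htop : M' ⊔ Submodule.span A {B r} = ⊤ := by
      by_contra hne
      have heq := hM'max.eq_of_le hne le_sup_left
      have hmem : B r ∈ M' ⊔ Submodule.span A {B r} :=
        Submodule.mem_sup_right (Submodule.mem_span_singleton_self _)
      rw [← heq] at hmem
      exact hBr hmem
    have h1sup : (1 : A) ∈ M' ⊔ Submodule.span A {B r} := htop ▸ Submodule.mem_top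
    obtain ⟨m, hm, z, hz, hmz⟩ := Submodule.mem_sup.1 h1sup
    obtain ⟨cc, hcc⟩ := Submodule.mem_span_singleton.1 hz
    rw [smul_eq_mul] at hcc
    obtain ⟨c', hc'⟩ := hsurj cc
    have hkey : B (1 - c' * r) ∈ M' := by
      have e1 : B (1 - c' * r) = (B 1 - 1) + ((1 - cc * B r) - (B c' - cc) * B r) := by
        rw [hsub, hmul, sub_mul]; abel
      have hm' : (1 : A) - cc * B r = m := by rw [hcc, ← hmz]; abel
      rw [e1, hm']
      exact add_mem (hKM' hB1) (sub_mem hm (hKM' (hKr _ hc' (B r))))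
    have ha : (1 : A) - c' * r ∈ M'' := hlt.le ((hmemM _).2 hkey)
    have hb' : c' * r ∈ M'' := by simpa [smul_eq_mul] using M''.smul_mem c' hr''
    have hone : (1 : A) ∈ M'' := by
      have := add_mem ha hb'
      simpa using this
    exact Submodule.eq_top_iff'.2 fun y => by
      simpa [smul_eq_mul] using M''.smul_mem y hone
  exact (hmemM b).1 (hb ⟨hKM, hMmax⟩)

/-- Let `A` be a finite-dimensional algebra over a field `k`, `T` an algebra
anti-endomorphism of `A` (a `k`-linear map with `T (u*v) = T v * T u`), `x ∈ J(A)`, and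
`a ∈ A`.  Then the linear operator `l(a) ∘ r(x) ∘ T : v ↦ a * T v * x` is nilpotent. -/
theorem trace_aux_antiendo_nilpotent
    {k A : Type*} [Field k] [Ring A] [Algebra k A] [FiniteDimensional k A]
    (T : A →ₗ[k] A) (hT : ∀ u v : A, T (u * v) = T v * T u)
    (x : A) (hx : x ∈ Ideal.jacobson (⊥ : Ideal A)) (a : A) :
    IsNilpotent ((LinearMap.mulLeft k a) ∘ₗ (LinearMap.mulRight k x) ∘ₗ T) := by
  classical
  set S := (LinearMap.mulLeft k a) ∘ₗ (LinearMap.mulRight k x) ∘ₗ T with hSdef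
  have hSapp : ∀ v : A, S v = a * (T v * x) := fun v => rfl
  set Bl : A →ₗ[k] A := T ∘ₗ T with hBldef
  have hBlmul : ∀ u v : A, Bl (u * v) = Bl u * Bl v := by
    intro u v
    calc Bl (u * v) = T (T (u * v)) := rfl
      _ = T (T v * T u) := by rw [hT]
      _ = T (T u) * T (T v) := by rw [hT]
      _ = Bl u * Bl v := rfl
  have hBlpowmul : ∀ (n : ℕ) (u v : A), (Bl ^ n) (u * v) = (Bl ^ n) u * (Bl ^ n) v := by
    intro n
    induction n with
    | zero => intro u v; simp
    | succ m ih =>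
      intro u v
      simp only [pow_succ, Module.End.mul_apply]
      rw [hBlmul, ih]
  have hpow_succ_apply : ∀ (m : ℕ) (v : A), (Bl ^ (m + 1)) v = (Bl ^ m) (Bl v) := by
    intro m v
    rw [pow_succ, Module.End.mul_apply]
  -- kernels of powers of Bl stabilize
  haveI hNoethkA : IsNoetherian k A := inferInstance
  have hker_mono : Monotone fun n => LinearMap.ker (Bl ^ n) := by
    intro n m hnm
    obtain ⟨c, rfl⟩ := Nat.le.dest hnm
    intro z hz
    rw [LinearMap.mem_ker] at hz ⊢
    rw [add_comm, pow_add, Module.End.mul_apply, hz, map_zero]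
  obtain ⟨n0, hn0⟩ := monotone_stabilizes_iff_noetherian.mpr hNoethkA
    ⟨fun n => LinearMap.ker (Bl ^ n), hker_mono⟩
  set Nn := n0 + 1 with hNndef
  have hkerstab : ∀ m, Nn ≤ m → LinearMap.ker (Bl ^ Nn) = LinearMap.ker (Bl ^ m) := by
    intro m hm
    have h1 := hn0 Nn (Nat.le_succ n0)
    have h2 := hn0 m (le_trans (Nat.le_succ n0) hm)
    exact h1.symm.trans h2
  -- the ideal K
  set K : Ideal A :=
    { carrier := {z : A | (Bl ^ Nn) z = 0}
      add_mem' := fun {u v} hu hv => by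
        simp only [Set.mem_setOf_eq] at *
        rw [map_add, hu, hv, add_zero]
      zero_mem' := by simp
      smul_mem' := fun r z hz => by
        simp only [Set.mem_setOf_eq, smul_eq_mul] at *
        rw [hBlpowmul, hz, mul_zero] } with hKdef
  have hmemK : ∀ z : A, z ∈ K ↔ (Bl ^ Nn) z = 0 := fun z => Iff.rfl
  have hKr : ∀ z ∈ K, ∀ b : A, z * b ∈ K := by
    intro z hz b
    rw [hmemK] at hz ⊢
    rw [hBlpowmul, hz, zero_mul]
  have hBK : ∀ z ∈ K, T (T z) ∈ K := by
    intro z hz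
    rw [hmemK] at hz ⊢
    have hz' : (Bl ^ (Nn + 1)) z = 0 := by
      have hmem : z ∈ LinearMap.ker (Bl ^ (Nn + 1)) :=
        (hkerstab (Nn + 1) (Nat.le_succ _)) ▸ (LinearMap.mem_ker.2 hz)
      exact LinearMap.mem_ker.1 hmem
    calc (Bl ^ Nn) (T (T z)) = (Bl ^ Nn) (Bl z) := rfl
      _ = (Bl ^ (Nn + 1)) z := (hpow_succ_apply Nn z).symm
      _ = 0 := hz'
  -- surjectivity of Bl modulo K
  set Kk : Submodule k A := LinearMap.ker (Bl ^ Nn) with hKkdef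
  have hKkK : ∀ z : A, z ∈ Kk ↔ z ∈ K := by
    intro z
    rw [hKkdef, LinearMap.mem_ker, hmemK]
  have hle : Kk ≤ Kk.comap Bl := by
    intro z hz
    rw [Submodule.mem_comap, hKkK]
    exact hBK z ((hKkK z).1 hz)
  set φ : (A ⧸ Kk) →ₗ[k] (A ⧸ Kk) := Kk.mapQ Kk Bl hle with hφdef
  have hφinj : Function.Injective φ := by
    rw [← LinearMap.ker_eq_bot, eq_bot_iff]
    intro w hw
    obtain ⟨z, rfl⟩ := Submodule.Quotient.mk_surjective Kk w
    rw [LinearMap.mem_ker, hφdef, Submodule.mapQ_apply, Submodule.Quotient.mk_eq_zero] at hw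
    rw [Submodule.mem_bot, Submodule.Quotient.mk_eq_zero]
    rw [hkerstab (Nn + 1) (Nat.le_succ _), LinearMap.mem_ker, hpow_succ_apply]
    exact LinearMap.mem_ker.1 hw
  have hφsurj : Function.Surjective φ := LinearMap.surjective_of_injective hφinj
  have hsurj : ∀ y : A, ∃ u, T (T u) - y ∈ K := by
    intro y
    obtain ⟨w, hw⟩ := hφsurj (Submodule.Quotient.mk y)
    obtain ⟨u, rfl⟩ := Submodule.Quotient.mk_surjective Kk w
    refine ⟨u, ?_⟩
    rw [hφdef, Submodule.mapQ_apply] at hw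
    have hmem : Bl u - y ∈ Kk := (Submodule.Quotient.eq Kk).1 hw
    exact (hKkK _).1 hmem
  -- instances for the Nakayama argument
  haveI hArtA : IsArtinianRing A := IsArtinianRing.of_finite k A
  haveI hNoethAA : IsNoetherian A A := isNoetherian_of_tower k hNoethkA
  -- B preserves the Jacobson radical of K
  have hjac : ∀ b ∈ Ideal.jacobson K, T (T b) ∈ Ideal.jacobson K :=
    jacobson_stable_of_mul K (fun v => T (T v))
      (fun u v => by
        calc T (T (u * v)) = T (T v * T u) := by rw [hT]
          _ = T (T u) * T (T v) := by rw [hT])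
      (fun u v => by simp only [map_add])
      (fun u v => by simp only [map_sub])
      (by simp only [map_zero])
      hBK hKr hsurj
  -- the sequence c
  set q : A := T a * x with hqdef
  have hqJ : q ∈ Ideal.jacobson K := by
    have hqbot : q ∈ Ideal.jacobson (⊥ : Ideal A) := by
      simpa [hqdef, smul_eq_mul] using (Ideal.jacobson (⊥ : Ideal A)).smul_mem (T a) hx
    exact Ideal.jacobson_mono bot_le hqbot
  set c : ℕ → A := fun n => Nat.rec (1 : A) (fun _ cn => T (T cn) * q) n with hcdef
  have hc0 : c 0 = 1 := rfl
  have hcs : ∀ n, c (n + 1) = T (T (c n)) * q := fun n => rfl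
  have hBliter : ∀ (n : ℕ) (v : A), (Bl ^ (n + 1)) v = T (T ((Bl ^ n) v)) := by
    intro n v
    have h : Bl ^ (n + 1) = Bl * Bl ^ n := by rw [← pow_succ']
    rw [h, Module.End.mul_apply]
    rfl
  have hcadd : ∀ m n, c (m + n) = (Bl ^ n) (c m) * c n := by
    intro m n
    induction n with
    | zero => simp [hc0]
    | succ p ih =>
      have hstep : m + (p + 1) = (m + p) + 1 := rfl
      rw [hstep, hcs, ih]
      rw [show T (T ((Bl ^ p) (c m) * c p)) = T (T ((Bl ^ p) (c m))) * T (T (c p)) from by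
        rw [hT, hT]]
      rw [mul_assoc, ← hBliter p (c m), ← hcs p]
  have hcI : ∀ n, (Bl ^ n) (c 1) ∈ Ideal.jacobson K := by
    intro n
    induction n with
    | zero =>
      simp only [pow_zero, Module.End.one_apply]
      have h01 : c 1 = T (T 1) * q := rfl
      rw [h01]
      simpa [smul_eq_mul] using (Ideal.jacobson K).smul_mem (T (T 1)) hqJ
    | succ p ih =>
      rw [hBliter]
      exact hjac _ ih
  have hcchain : ∀ n, c n ∈ idealChain (Ideal.jacobson K) K n := by
    intro n
    induction n with
    | zero => exact Submodule.mem_top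
    | succ p ih =>
      have h1p : c (p + 1) = (Bl ^ p) (c 1) * c p := by
        rw [show p + 1 = 1 + p from Nat.add_comm p 1, hcadd 1 p]
      rw [h1p]
      have hsm : (Bl ^ p) (c 1) • c p ∈ Ideal.jacobson K • idealChain (Ideal.jacobson K) K p :=
        Submodule.smul_mem_smul (hcI p) ih
      rw [smul_eq_mul] at hsm
      exact Submodule.mem_sup_left hsm
  obtain ⟨t, htle⟩ := exists_idealChain_le K hKr
  have hcK : c t ∈ K := htle (hcchain t)
  have hct : c (t + Nn) = 0 := by
    rw [hcadd t Nn, (hmemK (c t)).1 hcK, zero_mul]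
  -- powers of S
  have hSpow : ∀ (n : ℕ) (v : A), ∃ w, (S ^ (2 * n)) v = w * c n := by
    intro n
    induction n with
    | zero => intro v; exact ⟨v, by simp [hc0]⟩
    | succ p ih =>
      intro v
      obtain ⟨w, hw⟩ := ih v
      refine ⟨a * (T x * T (T w)), ?_⟩
      have key : (S ^ 2) (w * c p) = (a * (T x * T (T w))) * c (p + 1) := by
        have h1 : (S ^ 2) (w * c p) = S (S (w * c p)) := by
          rw [pow_succ, pow_one, Module.End.mul_apply]
        rw [h1, hSapp, hSapp]
        rw [hT a (T (w * c p) * x)]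
        rw [hT (T (w * c p)) x]
        rw [hT w (c p)]
        rw [hT (T (c p)) (T w)]
        rw [hcs p]
        simp only [mul_assoc]
        rfl
      calc (S ^ (2 * (p + 1))) v = (S ^ 2) ((S ^ (2 * p)) v) := by
            rw [show 2 * (p + 1) = 2 + 2 * p by ring, pow_add, Module.End.mul_apply]
        _ = (S ^ 2) (w * c p) := by rw [hw]
        _ = (a * (T x * T (T w))) * c (p + 1) := key
  refine ⟨2 * (t + Nn), ?_⟩
  ext v
  obtain ⟨w, hw⟩ := hSpow (t + Nn) v
  simp [hw, hct]
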